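/- In the Farey graph, if two distinct vertices a/b and c/d satisfy |ad - bc| ≤ 2, then their graph distance is at most 2. -/

import Mathlib

/-- Vertices of the Farey graph: reduced fractions `a/b` with `b ≥ 0`
(including `∞ = 1/0`). -/
def FareyVertex : Type := {p : ℤ × ℤ // 0 ≤ p.2 ∧ Int.gcd p.1 p.2 = 1}

/-- The Farey graph: `a/b` and `c/d` are adjacent iff `|ad - bc| = 1`. -/
def FareyGraph : SimpleGraph FareyVertex where
  Adj x y := |x.1.1 * y.1.2 - x.1.2 * y.1.1| = 1
  symm := by
    constructor
    intro x y h
    rw [show y.1.1 * x.1.2 - y.1.2 * x.1.1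
        = -(x.1.1 * y.1.2 - x.1.2 * y.1.1) by ring, abs_neg]
    exact h
  loopless := by
    constructor
    intro x h
    simp only [show x.1.1 * x.1.2 - x.1.2 * x.1.1 = 0 by ring, abs_zero] at h
    exact zero_ne_one h


lemma farey_dist_le_two {x m y : FareyVertex}
    (h1 : FareyGraph.Adj x m) (h2 : FareyGraph.Adj m y) :
    FareyGraph.dist x y ≤ 2 := by
  have := SimpleGraph.dist_le
    (SimpleGraph.Walk.cons h1 (SimpleGraph.Walk.cons h2 SimpleGraph.Walk.nil))
  simpa using this

lemma parity_key : ∀ A B C D U V W X : ZMod 2,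
    U*A+V*B = 1 → W*C+X*D = 1 → A*D - B*C = 0 → A + C = 0 ∧ B + D = 0 := by
  decide

lemma farey_det_two (a b c d : ℤ) (hb : 0 ≤ b) (hab : Int.gcd a b = 1)
    (hd : 0 ≤ d) (hcd : Int.gcd c d = 1)
    (he : a*d - b*c = 2 ∨ a*d - b*c = -2) :
    FareyGraph.dist ⟨(a,b), hb, hab⟩ ⟨(c,d), hd, hcd⟩ ≤ 2 := by
  obtain ⟨u, v, huv⟩ := Int.isCoprime_iff_gcd_eq_one.mpr hab
  obtain ⟨w, z, hwz⟩ := Int.isCoprime_iff_gcd_eq_one.mpr hcd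
  have key := parity_key (a : ZMod 2) b c d u v w z
    (by have := congrArg (Int.cast : ℤ → ZMod 2) huv; push_cast at this; exact this)
    (by have := congrArg (Int.cast : ℤ → ZMod 2) hwz; push_cast at this; exact this)
    (by rcases he with he | he <;>
        · have := congrArg (Int.cast : ℤ → ZMod 2) he; push_cast at this;
          rw [this]; decide)
  have hac : (2:ℤ) ∣ a + c := by
    have := key.1
    rwa [show ((a:ZMod 2) + c) = ((a+c : ℤ) : ZMod 2) by push_cast; ring,
      ZMod.intCast_zmod_eq_zero_iff_dvd] at this
  have hbd : (2:ℤ) ∣ b + d := by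
    have := key.2
    rwa [show ((b:ZMod 2) + d) = ((b+d : ℤ) : ZMod 2) by push_cast; ring,
      ZMod.intCast_zmod_eq_zero_iff_dvd] at this
  obtain ⟨p, hp⟩ := hac
  obtain ⟨q, hq⟩ := hbd
  have e1 : 2 * (a*q - b*p) = a*d - b*c := by linear_combination b*hp - a*hq
  have e2 : 2 * (p*d - q*c) = a*d - b*c := by linear_combination c*hq - d*hp
  have hq0 : 0 ≤ q := by omega
  have d1 : |a*q - b*p| = 1 := by
    rcases he with he | he <;> rw [he] at e1 <;> rw [abs_eq (by norm_num)] <;>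
      [left; right] <;> linarith
  have d2 : |p*d - q*c| = 1 := by
    rcases he with he | he <;> rw [he] at e2 <;> rw [abs_eq (by norm_num)] <;>
      [left; right] <;> linarith
  have hpq : Int.gcd p q = 1 := by
    rcases (abs_eq (by norm_num : (0:ℤ) ≤ 1)).mp d1 with h' | h'
    · exact Int.isCoprime_iff_gcd_eq_one.mp ⟨-b, a, by linarith⟩
    · exact Int.isCoprime_iff_gcd_eq_one.mp ⟨b, -a, by linarith⟩
  exact farey_dist_le_two (m := ⟨(p,q), hq0, hpq⟩) d1 d2

lemma farey_adj_dist (x y : FareyVertex) (h : FareyGraph.Adj x y) :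
    FareyGraph.dist x y ≤ 2 := by
  have := SimpleGraph.dist_le (SimpleGraph.Walk.cons h SimpleGraph.Walk.nil)
  simp at this
  omega

/-- In the Farey graph, if two distinct vertices `a/b` and `c/d` satisfy
`|ad - bc| ≤ 2`, then their graph distance is at most `2`. -/
theorem stmt_11 (x y : FareyVertex) (hxy : x ≠ y)
    (h : |x.1.1 * y.1.2 - x.1.2 * y.1.1| ≤ 2) :
    FareyGraph.dist x y ≤ 2 := by
  obtain ⟨⟨a,b⟩, hb, hab⟩ := x
  obtain ⟨⟨c,d⟩, hd, hcd⟩ := y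
  simp only at h hb hd hab hcd
  have habs : a*d - b*c = -2 ∨ a*d - b*c = -1 ∨ a*d - b*c = 0 ∨
      a*d - b*c = 1 ∨ a*d - b*c = 2 := by
    rcases abs_le.mp h with ⟨h1, h2⟩; omega
  rcases habs with he | he | he | he | he
  · exact farey_det_two a b c d hb hab hd hcd (Or.inr he)
  · exact farey_adj_dist _ _ (by show |a*d - b*c| = 1; rw [he]; norm_num)
  · -- det = 0
    have hb0 : b = 0 := by
      by_contra hb0
      have h1 : b ∣ a * d := ⟨c, by linarith⟩
      have h2 : d ∣ c * b := ⟨a, by linarith⟩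
      have hbd : b ∣ d := (Int.isCoprime_iff_gcd_eq_one.mpr hab).symm.dvd_of_dvd_mul_left h1
      have hdb : d ∣ b := (Int.isCoprime_iff_gcd_eq_one.mpr hcd).symm.dvd_of_dvd_mul_left h2
      have hbd' : b = d := Int.dvd_antisymm hb hd hbd hdb
      have hac : a = c := by
        subst hbd'
        exact mul_left_cancel₀ (by omega : b ≠ 0) (by linarith : b * a = b * c)
      exact hxy (Subtype.ext (Prod.ext hac hbd'))
    have ha1 : |a| = 1 := by
      have h' : a.natAbs = 1 := by rw [hb0] at hab; simpa using hab
      rcases Int.natAbs_eq_iff.mp h' with h' | h' <;> rw [h'] <;> norm_num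
    have hd0 : d = 0 := by
      rcases (abs_eq (by norm_num : (0:ℤ) ≤ 1)).mp ha1 with h' | h' <;>
        (rw [hb0, h'] at he; omega)
    have hc1 : |c| = 1 := by
      have h' : c.natAbs = 1 := by rw [hd0] at hcd; simpa using hcd
      rcases Int.natAbs_eq_iff.mp h' with h' | h' <;> rw [h'] <;> norm_num
    have m01 : (0:ℤ) ≤ 1 ∧ Int.gcd (0:ℤ) (1:ℤ) = 1 := by norm_num
    refine farey_dist_le_two (m := ⟨(0,1), m01⟩) ?_ ?_
    · show |a*1 - b*0| = 1; simpa using ha1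
    · show |0*d - 1*c| = 1; simpa using hc1
  · exact farey_adj_dist _ _ (by show |a*d - b*c| = 1; rw [he]; norm_num)
  · exact farey_det_two a b c d hb hab hd hcd (Or.inl he)
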